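/- For all Schwartz functions f, g ∈ S(ℝ⁴, ℂ) and j ∈ {1, 2}: (1) the Leibniz rule ∂_j(f ⋆ g) = (∂_j f) ⋆ g + f ⋆ (∂_j g) holds pointwise on ℝ⁴ (all twisted convolutions being absolutely convergent); (2) ∂_j(f*) = (∂_j f)*; and (3) ∂₁(∂₂ f) = ∂₂(∂₁ f). -/

import Mathlib

open MeasureTheory Complex
open scoped ENNReal

noncomputable section

/-- The skew-symmetric matrix `τ`. -/
def tauMat (hb th B : ℝ) : Fin 4 → Fin 4 → ℝ :=
  ![![0, B / (2 * Real.pi * hb), -1 / (2 * Real.pi * hb), 0],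
    ![-(B / (2 * Real.pi * hb)), 0, 0, -1 / (2 * Real.pi * hb)],
    ![1 / (2 * Real.pi * hb), 0, 0, th / (2 * Real.pi * hb ^ 2)],
    ![0, 1 / (2 * Real.pi * hb), -(th / (2 * Real.pi * hb ^ 2)), 0]]

/-- The pairing `⟨p, τq⟩ = Σ_{n,m} p_n τ_{nm} q_m`. -/
def tauPair (hb th B : ℝ) (p q : Fin 4 → ℝ) : ℝ :=
  ∑ n : Fin 4, ∑ m : Fin 4, p n * tauMat hb th B n m * q m

/-- The twisted convolution `(f ⋆ g)(p) = ∫ f(q) g(p−q) exp(πi⟨p, τq⟩) dq`. -/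
def twConv (hb th B : ℝ) (f g : (Fin 4 → ℝ) → ℂ) (p : Fin 4 → ℝ) : ℂ :=
  ∫ q : Fin 4 → ℝ, f q * g (p - q) * Complex.exp (Real.pi * Complex.I * tauPair hb th B p q)

/-- The involution `f*(q) = conj (f (−q))`. -/
def invol (f : (Fin 4 → ℝ) → ℂ) : (Fin 4 → ℝ) → ℂ := fun q => starRingEnd ℂ (f (-q))

/-- `q♯₁ = B·q₂ − q₃` and `q♯₂ = −B·q₁ − q₄`. -/
def qsharp (B : ℝ) : Fin 2 → (Fin 4 → ℝ) → ℝ :=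
  ![fun q => B * q 1 - q 2, fun q => -B * q 0 - q 3]

/-- The derivation `(∂_j f)(q) = −i·q♯_j·f(q)`. -/
def dop (B : ℝ) (j : Fin 2) (f : (Fin 4 → ℝ) → ℂ) : (Fin 4 → ℝ) → ℂ := fun q =>
  -Complex.I * qsharp B j q * f q


lemma qsharp_cont (B : ℝ) (j : Fin 2) : Continuous (qsharp B j) := by
  fin_cases j <;> simp [qsharp] <;> fun_prop

lemma qsharp_abs (B : ℝ) (j : Fin 2) (q : Fin 4 → ℝ) :
    |qsharp B j q| ≤ (|B| + 1) * ‖q‖ := by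
  have h : ∀ i : Fin 4, |q i| ≤ ‖q‖ := fun i => by
    simpa using norm_le_pi_norm q i
  have hn : (0:ℝ) ≤ ‖q‖ := norm_nonneg q
  fin_cases j <;> simp only [qsharp, Matrix.cons_val_zero, Matrix.cons_val_one, Matrix.head_cons]
  · calc |B * q 1 - q 2| ≤ |B * q 1| + |q 2| := abs_sub _ _
      _ ≤ |B| * ‖q‖ + ‖q‖ := by
        rw [abs_mul]
        gcongr <;> [exact h 1; exact h 2]
      _ = (|B| + 1) * ‖q‖ := by ring
  · calc |-B * q 0 - q 3| ≤ |-B * q 0| + |q 3| := abs_sub _ _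
      _ ≤ |B| * ‖q‖ + ‖q‖ := by
        rw [abs_mul, abs_neg]
        gcongr <;> [exact h 0; exact h 3]
      _ = (|B| + 1) * ‖q‖ := by ring

lemma qsharp_sub (B : ℝ) (j : Fin 2) (p q : Fin 4 → ℝ) :
    qsharp B j (p - q) = qsharp B j p - qsharp B j q := by
  fin_cases j <;> simp [qsharp] <;> ring

lemma qsharp_neg (B : ℝ) (j : Fin 2) (q : Fin 4 → ℝ) :
    qsharp B j (-q) = -qsharp B j q := by
  fin_cases j <;> simp [qsharp] <;> ring

lemma tauPair_cont (hb th B : ℝ) (p : Fin 4 → ℝ) :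
    Continuous (fun q => tauPair hb th B p q) := by
  unfold tauPair
  fun_prop

lemma norm_phase (hb th B : ℝ) (p q : Fin 4 → ℝ) :
    ‖Complex.exp (Real.pi * Complex.I * tauPair hb th B p q)‖ = 1 := by
  rw [Complex.norm_exp]
  simp [Complex.mul_re, Complex.mul_im]

lemma integ_aux (f g : SchwartzMap (Fin 4 → ℝ) ℂ) (hb th B : ℝ) (p : Fin 4 → ℝ)
    (φ : (Fin 4 → ℝ) → ℂ) (hφc : Continuous φ) (C : ℝ)
    (hφ : ∀ q, ‖φ q‖ ≤ C * (1 + ‖q‖)) :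
    Integrable fun q : Fin 4 → ℝ =>
      φ q * f q * g (p - q) * Complex.exp (Real.pi * Complex.I * tauPair hb th B p q) := by
  obtain ⟨M, hM⟩ := g.decay 0 0
  have hMbd : ∀ x, ‖g x‖ ≤ M := by
    intro x; simpa using hM.2 x
  have hM0 : 0 ≤ M := le_trans (norm_nonneg _) (hMbd 0)
  have hC0 : 0 ≤ C := by
    have h1 := hφ 0
    have h2 := norm_nonneg (φ 0)
    simp only [norm_zero] at h1
    nlinarith
  have hint : Integrable (fun q : Fin 4 → ℝ => C * M * (‖f q‖ + ‖q‖ * ‖f q‖)) := by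
    apply Integrable.const_mul
    exact f.integrable.norm.add (by simpa using f.integrable_pow_mul volume 1)
  apply hint.mono'
  · apply Continuous.aestronglyMeasurable
    refine ((hφc.mul f.continuous).mul
      (g.continuous.comp (continuous_const.sub continuous_id))).mul ?_
    exact Complex.continuous_exp.comp
      (by exact (continuous_const.mul ((Complex.continuous_ofReal).comp (tauPair_cont hb th B p))))
  · refine Filter.Eventually.of_forall fun q => ?_
    rw [norm_mul, norm_mul, norm_mul, norm_phase, mul_one]
    calc ‖φ q‖ * ‖f q‖ * ‖g (p - q)‖
        ≤ (C * (1 + ‖q‖)) * ‖f q‖ * ‖g (p - q)‖ := by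
          gcongr
          exact hφ q
      _ ≤ (C * (1 + ‖q‖)) * ‖f q‖ * M := by
          have hA : (0:ℝ) ≤ C * (1 + ‖q‖) * ‖f q‖ := by
            have : (0:ℝ) ≤ 1 + ‖q‖ := by positivity
            exact mul_nonneg (mul_nonneg hC0 this) (norm_nonneg _)
          exact mul_le_mul_of_nonneg_left (hMbd _) hA
      _ = C * M * (‖f q‖ + ‖q‖ * ‖f q‖) := by ring

theorem stmt8 (hb th B r s : ℝ) (hhb : hb ≠ 0) (hth : th ≠ 0) (hB : B ≠ 0)
    (hnd : hb - th * B ≠ 0) (hrs : r * th * B ≠ hb)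
    (f g : SchwartzMap (Fin 4 → ℝ) ℂ) (j : Fin 2) :
    -- all twisted convolutions below are absolutely convergent
    (∀ p : Fin 4 → ℝ,
      (Integrable fun q : Fin 4 → ℝ =>
        (f : (Fin 4 → ℝ) → ℂ) q * (g : (Fin 4 → ℝ) → ℂ) (p - q) *
          Complex.exp (Real.pi * Complex.I * tauPair hb th B p q)) ∧
      (Integrable fun q : Fin 4 → ℝ =>
        dop B j ⇑f q * (g : (Fin 4 → ℝ) → ℂ) (p - q) *
          Complex.exp (Real.pi * Complex.I * tauPair hb th B p q)) ∧
      (Integrable fun q : Fin 4 → ℝ =>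
        (f : (Fin 4 → ℝ) → ℂ) q * dop B j ⇑g (p - q) *
          Complex.exp (Real.pi * Complex.I * tauPair hb th B p q))) ∧
    -- (1) Leibniz rule
    (∀ p : Fin 4 → ℝ,
      dop B j (twConv hb th B ⇑f ⇑g) p =
        twConv hb th B (dop B j ⇑f) ⇑g p + twConv hb th B ⇑f (dop B j ⇑g) p) ∧
    -- (2) compatibility with the involution
    dop B j (invol ⇑f) = invol (dop B j ⇑f) ∧
    -- (3) commutativity of the derivations
    dop B 0 (dop B 1 ⇑f) = dop B 1 (dop B 0 ⇑f) := by
  have h1 : ∀ p : Fin 4 → ℝ, Integrable fun q : Fin 4 → ℝ =>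
      (f : (Fin 4 → ℝ) → ℂ) q * (g : (Fin 4 → ℝ) → ℂ) (p - q) *
        Complex.exp (Real.pi * Complex.I * tauPair hb th B p q) := by
    intro p
    have := integ_aux f g hb th B p (fun _ => 1) continuous_const 1
      (fun q => by
        have h := norm_nonneg q
        simp only [norm_one, one_mul]
        linarith)
    simpa using this
  have h2 : ∀ p : Fin 4 → ℝ, Integrable fun q : Fin 4 → ℝ =>
      dop B j ⇑f q * (g : (Fin 4 → ℝ) → ℂ) (p - q) *
        Complex.exp (Real.pi * Complex.I * tauPair hb th B p q) := by
    intro p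
    have := integ_aux f g hb th B p (fun q => -Complex.I * (qsharp B j q : ℂ))
      (continuous_const.mul (Complex.continuous_ofReal.comp (qsharp_cont B j)))
      (|B| + 1) ?_
    · exact this
    · intro q
      have := qsharp_abs B j q
      have hq : (0:ℝ) ≤ ‖q‖ := norm_nonneg q
      have hB1 : (0:ℝ) ≤ |B| + 1 := by positivity
      calc ‖-Complex.I * (qsharp B j q : ℂ)‖ = |qsharp B j q| := by
            simp
        _ ≤ (|B| + 1) * ‖q‖ := qsharp_abs B j q
        _ ≤ (|B| + 1) * (1 + ‖q‖) := by nlinarith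
  have h3 : ∀ p : Fin 4 → ℝ, Integrable fun q : Fin 4 → ℝ =>
      (f : (Fin 4 → ℝ) → ℂ) q * dop B j ⇑g (p - q) *
        Complex.exp (Real.pi * Complex.I * tauPair hb th B p q) := by
    intro p
    have key := integ_aux f g hb th B p (fun q => -Complex.I * (qsharp B j (p - q) : ℂ))
      (continuous_const.mul (Complex.continuous_ofReal.comp
        ((qsharp_cont B j).comp (continuous_const.sub continuous_id))))
      (|qsharp B j p| + |B| + 1) ?_
    · have heq : (fun q : Fin 4 → ℝ =>
          (f : (Fin 4 → ℝ) → ℂ) q * dop B j ⇑g (p - q) *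
            Complex.exp (Real.pi * Complex.I * tauPair hb th B p q)) =
          fun q : Fin 4 → ℝ =>
            (-Complex.I * (qsharp B j (p - q) : ℂ)) * f q * g (p - q) *
              Complex.exp (Real.pi * Complex.I * tauPair hb th B p q) := by
        funext q; simp only [dop]; ring
      rw [heq]; exact key
    · intro q
      have habs := qsharp_abs B j q
      have hsub := qsharp_sub B j p q
      have hq : (0:ℝ) ≤ ‖q‖ := norm_nonneg q
      have hB1 : (0:ℝ) ≤ |B| := abs_nonneg B
      have hP : (0:ℝ) ≤ |qsharp B j p| := abs_nonneg _
      calc ‖-Complex.I * (qsharp B j (p - q) : ℂ)‖ = |qsharp B j (p - q)| := by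
            simp
        _ = |qsharp B j p - qsharp B j q| := by rw [hsub]
        _ ≤ |qsharp B j p| + |qsharp B j q| := abs_sub _ _
        _ ≤ (|qsharp B j p| + |B| + 1) * (1 + ‖q‖) := by nlinarith
  refine ⟨fun p => ⟨h1 p, h2 p, h3 p⟩, ?_, ?_, ?_⟩
  · intro p
    show -Complex.I * (qsharp B j p : ℂ) * twConv hb th B ⇑f ⇑g p = _
    rw [twConv, ← MeasureTheory.integral_const_mul]
    rw [twConv, twConv, ← integral_add (h2 p) (h3 p)]
    congr 1
    funext q
    have hsub := qsharp_sub B j p q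
    simp only [dop, hsub]
    push_cast
    ring
  · funext q
    simp only [dop, invol, qsharp_neg, map_mul, map_neg, Complex.conj_I,
      Complex.conj_ofReal, Complex.ofReal_neg]
    ring
  · funext q
    simp only [dop]
    ring
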